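/- Let γ : [0,1] → ℝ² be a closed rectifiable curve (γ(0) = γ(1), γ continuous of bounded variation) and let f : ℝ² → ℝ² be continuous on the image of γ, with line integral I = ∫_γ f · dγ. Let ω = sup over pairs of points p, q in the image of γ of ‖f(p) − f(q)‖. Then |I| ≤ ω · L, where L = eVariationOn γ [0,1] is the length of γ: the circumferential line integral is bounded by the oscillation of the integrand times the arc length. -/

import Mathlib

open MeasureTheory

/-- The Riemann–Stieltjes sum of `f` along `γ` for the tagged partition with division
points `t 0, …, t n` and tags `s 0, …, s (n-1)`. -/
noncomputable def RSSum (γ : ℝ → EuclideanSpace ℝ (Fin 2))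
    (f : EuclideanSpace ℝ (Fin 2) → EuclideanSpace ℝ (Fin 2))
    (n : ℕ) (t s : ℕ → ℝ) : ℝ :=
  ∑ i ∈ Finset.range n, (inner ℝ (f (γ (s i))) (γ (t (i + 1)) - γ (t i)) : ℝ)

/-- `I` is the Riemann–Stieltjes line integral of `f` along `γ` over `[0,1]`. -/
def IsRSIntegral (γ : ℝ → EuclideanSpace ℝ (Fin 2))
    (f : EuclideanSpace ℝ (Fin 2) → EuclideanSpace ℝ (Fin 2)) (I : ℝ) : Prop :=
  ∀ ε > (0 : ℝ), ∃ δ > (0 : ℝ), ∀ (n : ℕ) (t s : ℕ → ℝ),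
    t 0 = 0 → t n = 1 →
    (∀ i < n, t i ≤ t (i + 1)) →
    (∀ i < n, s i ∈ Set.Icc (t i) (t (i + 1))) →
    (∀ i < n, t (i + 1) - t i < δ) →
    |RSSum γ f n t s - I| < ε

/-- The line integral of `f` around a closed rectifiable curve is bounded by the
oscillation of `f` on the curve times the arc length of the curve. -/
theorem line_integral_le_oscillation_mul_length (γ : ℝ → EuclideanSpace ℝ (Fin 2))
    (hclosed : γ 0 = γ 1)
    (hc : ContinuousOn γ (Set.Icc 0 1))
    (hbv : eVariationOn γ (Set.Icc 0 1) < ⊤)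
    (f : EuclideanSpace ℝ (Fin 2) → EuclideanSpace ℝ (Fin 2))
    (hf : ContinuousOn f (γ '' Set.Icc 0 1))
    (I : ℝ) (hI : IsRSIntegral γ f I)
    (ω : ℝ)
    (hω : ω = sSup {x : ℝ | ∃ p ∈ γ '' Set.Icc 0 1, ∃ q ∈ γ '' Set.Icc 0 1,
      x = ‖f p - f q‖}) :
    |I| ≤ ω * (eVariationOn γ (Set.Icc 0 1)).toReal := by
  set S : Set ℝ := {x : ℝ | ∃ p ∈ γ '' Set.Icc 0 1, ∃ q ∈ γ '' Set.Icc 0 1,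
      x = ‖f p - f q‖} with hS
  set L : ℝ := (eVariationOn γ (Set.Icc 0 1)).toReal with hL
  -- compactness gives a bound on f over the curve
  have hK : IsCompact (γ '' Set.Icc 0 1) := isCompact_Icc.image_of_continuousOn hc
  obtain ⟨C, hC⟩ := hK.exists_bound_of_continuousOn hf
  have hbdd : BddAbove S := by
    refine ⟨2 * C, ?_⟩
    rintro x ⟨p, hp, q, hq, rfl⟩
    calc ‖f p - f q‖ ≤ ‖f p‖ + ‖f q‖ := norm_sub_le _ _
      _ ≤ C + C := add_le_add (hC p hp) (hC q hq)
      _ = 2 * C := by ring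
  have h0mem : (0 : ℝ) ∈ S := by
    refine ⟨γ 0, ⟨0, by simp, rfl⟩, γ 0, ⟨0, by simp, rfl⟩, by simp⟩
  have hω0 : 0 ≤ ω := hω ▸ le_csSup hbdd h0mem
  have hosc : ∀ a ∈ Set.Icc (0:ℝ) 1, ‖f (γ a) - f (γ 0)‖ ≤ ω := by
    intro a ha
    exact hω ▸ le_csSup hbdd ⟨γ a, ⟨a, ha, rfl⟩, γ 0, ⟨0, by simp, rfl⟩, rfl⟩
  -- key bound on any admissible Riemann–Stieltjes sum
  have key : ∀ (n : ℕ) (t s : ℕ → ℝ), t 0 = 0 → t n = 1 →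
      (∀ i < n, t i ≤ t (i + 1)) → (∀ i < n, s i ∈ Set.Icc (t i) (t (i + 1))) →
      |RSSum γ f n t s| ≤ ω * L := by
    intro n t s ht0 htn hstep htag
    have hmono : ∀ j ≤ n, ∀ i ≤ j, t i ≤ t j := by
      intro j hj
      induction j with
      | zero => intro i hi; interval_cases i; exact le_rfl
      | succ k ih =>
        intro i hi
        rcases Nat.lt_or_ge i (k+1) with h | h
        · exact (ih (le_of_lt (Nat.lt_of_lt_of_le (Nat.lt_succ_self k) hj)) i
            (Nat.lt_succ_iff.mp h)).trans (hstep k (Nat.lt_of_lt_of_le (Nat.lt_succ_self k) hj))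
        · have : i = k + 1 := le_antisymm hi h
          exact this ▸ le_rfl
    have htmem : ∀ i ≤ n, t i ∈ Set.Icc (0:ℝ) 1 := by
      intro i hi
      exact ⟨ht0 ▸ hmono i hi 0 (Nat.zero_le i), htn ▸ hmono n le_rfl i hi⟩
    have hsmem : ∀ i < n, s i ∈ Set.Icc (0:ℝ) 1 := by
      intro i hi
      obtain ⟨h1, h2⟩ := htag i hi
      exact ⟨(htmem i hi.le).1.trans h1, h2.trans (htmem (i+1) hi).2⟩
    -- sum of edists bounded by total variation
    have hsumvar : ∑ i ∈ Finset.range n, edist (γ (t (i+1))) (γ (t i))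
        ≤ eVariationOn γ (Set.Icc 0 1) := by
      apply eVariationOn.sum_le_of_monotoneOn_Iic
      · intro a ha b hb hab
        exact hmono b hb a hab
      · exact htmem
    have hsumnorm : ∑ i ∈ Finset.range n, ‖γ (t (i+1)) - γ (t i)‖ ≤ L := by
      have h1 : ENNReal.ofReal (∑ i ∈ Finset.range n, ‖γ (t (i+1)) - γ (t i)‖)
          = ∑ i ∈ Finset.range n, edist (γ (t (i+1))) (γ (t i)) := by
        rw [ENNReal.ofReal_sum_of_nonneg (fun i _ => norm_nonneg _)]
        refine Finset.sum_congr rfl fun i _ => ?_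
        rw [edist_dist, dist_eq_norm]
      rw [hL]
      rw [← ENNReal.ofReal_le_iff_le_toReal hbv.ne, h1]
      exact hsumvar
    -- telescoping: the increments sum to zero
    have htel : ∑ i ∈ Finset.range n, (γ (t (i+1)) - γ (t i)) = 0 := by
      rw [Finset.sum_range_sub (fun i => γ (t i)), ht0, htn, hclosed, sub_self]
    have hRS : RSSum γ f n t s
        = ∑ i ∈ Finset.range n, (inner ℝ (f (γ (s i)) - f (γ 0)) (γ (t (i+1)) - γ (t i)) : ℝ) := by
      unfold RSSum
      have : ∑ i ∈ Finset.range n, (inner ℝ (f (γ 0)) (γ (t (i+1)) - γ (t i)) : ℝ)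
          = inner ℝ (f (γ 0)) (∑ i ∈ Finset.range n, (γ (t (i+1)) - γ (t i))) :=
        (inner_sum _ _ _).symm
      simp only [inner_sub_left, Finset.sum_sub_distrib, this, htel, inner_zero_right, sub_zero]
    rw [hRS]
    calc |∑ i ∈ Finset.range n, (inner ℝ (f (γ (s i)) - f (γ 0)) (γ (t (i+1)) - γ (t i)) : ℝ)|
        ≤ ∑ i ∈ Finset.range n, |(inner ℝ (f (γ (s i)) - f (γ 0)) (γ (t (i+1)) - γ (t i)) : ℝ)| :=
          Finset.abs_sum_le_sum_abs _ _
      _ ≤ ∑ i ∈ Finset.range n, ω * ‖γ (t (i+1)) - γ (t i)‖ := by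
          refine Finset.sum_le_sum fun i hi => ?_
          have hi' := Finset.mem_range.mp hi
          calc |(inner ℝ (f (γ (s i)) - f (γ 0)) (γ (t (i+1)) - γ (t i)) : ℝ)|
              ≤ ‖f (γ (s i)) - f (γ 0)‖ * ‖γ (t (i+1)) - γ (t i)‖ := abs_real_inner_le_norm _ _
            _ ≤ ω * ‖γ (t (i+1)) - γ (t i)‖ :=
                mul_le_mul_of_nonneg_right (hosc _ (hsmem i hi')) (norm_nonneg _)
      _ = ω * ∑ i ∈ Finset.range n, ‖γ (t (i+1)) - γ (t i)‖ := (Finset.mul_sum _ _ _).symm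
      _ ≤ ω * L := mul_le_mul_of_nonneg_left hsumnorm hω0
  -- conclude by letting the mesh go to zero
  refine le_of_forall_pos_le_add fun ε hε => ?_
  obtain ⟨δ, hδ, hδ'⟩ := hI ε hε
  obtain ⟨n, hn⟩ := exists_nat_gt (1/δ)
  have hn0 : 0 < (n:ℝ) := lt_trans (by positivity) hn
  set t : ℕ → ℝ := fun i => (i:ℝ)/n with htdef
  have ht0 : t 0 = 0 := by simp [htdef]
  have htn : t n = 1 := by rw [htdef]; exact div_self hn0.ne'
  have hstep : ∀ i < n, t i ≤ t (i+1) := by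
    intro i _
    apply div_le_div_of_nonneg_right _ hn0.le
    · exact_mod_cast Nat.le_succ i
  have hdiff : ∀ i < n, t (i+1) - t i < δ := by
    intro i _
    have : t (i+1) - t i = 1/n := by
      simp only [htdef]
      push_cast
      field_simp
      ring
    rw [this]
    rw [div_lt_iff₀ hn0]
    rw [div_lt_iff₀ hδ] at hn
    linarith [hn]
  have htag : ∀ i < n, t i ∈ Set.Icc (t i) (t (i+1)) := fun i hi => ⟨le_rfl, hstep i hi⟩
  have h1 := hδ' n t t ht0 htn hstep htag hdiff
  have h2 := key n t t ht0 htn hstep htag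
  calc |I| ≤ |RSSum γ f n t t| + |RSSum γ f n t t - I| := by
        have := abs_sub_abs_le_abs_sub I (RSSum γ f n t t)
        rw [abs_sub_comm I (RSSum γ f n t t)] at this
        linarith
    _ ≤ ω * L + ε := add_le_add h2 h1.le
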